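/- Let h ∈ ω^ω and b a sequence of nonempty finite sets with h(n) ≤ |b(n)| for all n. Then limsup_{n→∞} h(n)/|b(n)| < 1 if and only if for every infinite set A ⊆ ω, ∏_{n∈A} h(n)/|b(n)| = 0. -/

import Mathlib

open Filter
open scoped Classical

lemma aux_prod_one_sub {s : Finset ℕ} {f : ℕ → ℝ} (h0 : ∀ i ∈ s, 0 ≤ f i)
    (h1 : ∀ i ∈ s, f i ≤ 1) : 1 - ∑ i ∈ s, f i ≤ ∏ i ∈ s, (1 - f i) := by
  classical
  induction s using Finset.induction with
  | empty => simp
  | @insert a s ha ih =>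
    rw [Finset.sum_insert ha, Finset.prod_insert ha]
    have h0a := h0 a (Finset.mem_insert_self a s)
    have h1a := h1 a (Finset.mem_insert_self a s)
    have ih' := ih (fun i hi => h0 i (Finset.mem_insert_of_mem hi))
      (fun i hi => h1 i (Finset.mem_insert_of_mem hi))
    have hs0 : 0 ≤ ∑ i ∈ s, f i := Finset.sum_nonneg fun i hi => h0 i (Finset.mem_insert_of_mem hi)
    nlinarith

theorem stmt_5 (h : ℕ → ℕ) (b : ℕ → Finset ℕ)
    (hne : ∀ n, (b n).Nonempty) (hle : ∀ n, h n ≤ (b n).card) :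
    limsup (fun n : ℕ => (h n : ℝ) / (b n).card) atTop < 1 ↔
      ∀ A : Set ℕ, A.Infinite →
        Tendsto
          (fun N : ℕ => ∏ n ∈ Finset.range N,
            (if n ∈ A then (h n : ℝ) / (b n).card else 1))
          atTop (nhds 0) := by
  set r : ℕ → ℝ := fun n => (h n : ℝ) / (b n).card with hr
  have hcard : ∀ n, (0:ℝ) < (b n).card := fun n => by
    exact_mod_cast (hne n).card_pos
  have hr0 : ∀ n, 0 ≤ r n := fun n => div_nonneg (Nat.cast_nonneg _) (hcard n).le
  have hr1 : ∀ n, r n ≤ 1 := fun n => by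
    rw [hr, div_le_one (hcard n)]
    exact_mod_cast hle n
  have hbd : IsBoundedUnder (· ≤ ·) atTop r := isBoundedUnder_of ⟨1, hr1⟩
  have hbd' : IsBoundedUnder (· ≥ ·) atTop r := isBoundedUnder_of ⟨0, hr0⟩
  constructor
  · intro hlt A hA
    set L := limsup r atTop with hL
    set c : ℝ := max ((L + 1) / 2) 0 with hc
    have hc1 : c < 1 := max_lt (by linarith) one_pos
    have hc0 : 0 ≤ c := le_max_right _ _
    have hLc : L < c := lt_of_lt_of_le (by linarith) (le_max_left _ _)
    obtain ⟨N₀, hN₀⟩ := eventually_atTop.mp (eventually_lt_of_limsup_lt hLc hbd)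
    set g : ℕ → ℕ := fun N => ((Finset.Ico N₀ N).filter (· ∈ A)).card with hg
    have hgt : Tendsto g atTop atTop := by
      rw [tendsto_atTop_atTop]
      intro k
      obtain ⟨t, hts, htc⟩ := (hA.diff (Set.finite_Iio N₀)).exists_subset_card_eq k
      refine ⟨(t.sup id) + 1, fun N hN => ?_⟩
      rw [← htc]
      apply Finset.card_le_card
      intro x hx
      have hx' := hts hx
      simp only [Finset.mem_filter, Finset.mem_Ico]
      refine ⟨⟨by simpa using hx'.2, ?_⟩, hx'.1⟩
      calc x ≤ t.sup id := Finset.le_sup (f := id) hx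
        _ < N := by omega
    have hP0 : ∀ N, 0 ≤ ∏ n ∈ Finset.range N, (if n ∈ A then r n else 1) := by
      intro N
      apply Finset.prod_nonneg
      intro n _
      split <;> [exact hr0 n; norm_num]
    refine squeeze_zero' (Eventually.of_forall hP0) ?_
      ((tendsto_pow_atTop_nhds_zero_of_lt_one hc0 hc1).comp hgt)
    filter_upwards [eventually_ge_atTop N₀] with N hN
    show (∏ n ∈ Finset.range N, (if n ∈ A then r n else 1)) ≤ c ^ g N
    have hsplit : (∏ n ∈ Finset.range N₀, (if n ∈ A then r n else 1)) *
        ∏ n ∈ Finset.Ico N₀ N, (if n ∈ A then r n else 1)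
        = ∏ n ∈ Finset.range N, (if n ∈ A then r n else 1) :=
      Finset.prod_range_mul_prod_Ico _ hN
    have h1' : (∏ n ∈ Finset.range N₀, (if n ∈ A then r n else 1)) ≤ 1 := by
      apply Finset.prod_le_one
      · intro n _; split <;> [exact hr0 n; norm_num]
      · intro n _; split <;> [exact hr1 n; exact le_rfl]
    have h2' : (∏ n ∈ Finset.Ico N₀ N, (if n ∈ A then r n else 1)) ≤ c ^ g N := by
      have : (∏ n ∈ Finset.Ico N₀ N, (if n ∈ A then r n else 1)) ≤
          ∏ n ∈ Finset.Ico N₀ N, (if n ∈ A then c else 1) := by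
        apply Finset.prod_le_prod
        · intro n _; split <;> [exact hr0 n; norm_num]
        · intro n hn
          have := hN₀ n (Finset.mem_Ico.mp hn).1
          split <;> [exact this.le; exact le_rfl]
      refine this.trans ?_
      rw [← Finset.prod_filter, Finset.prod_const]
    have h3' : 0 ≤ ∏ n ∈ Finset.Ico N₀ N, (if n ∈ A then r n else 1) := by
      apply Finset.prod_nonneg
      intro n _; split <;> [exact hr0 n; norm_num]
    calc ∏ n ∈ Finset.range N, (if n ∈ A then r n else 1)
        = _ * _ := hsplit.symm
      _ ≤ 1 * (c ^ g N) := by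
          apply mul_le_mul h1' h2' h3' zero_le_one
      _ = c ^ g N := one_mul _
  · intro H
    by_contra hnot
    push_neg at hnot
    have hfreq : ∀ m : ℕ, ∃ᶠ n in atTop, 1 - (1/2:ℝ) ^ (m + 2) < r n := by
      intro m
      apply frequently_lt_of_lt_limsup hbd'.isCoboundedUnder_le
      refine lt_of_lt_of_le ?_ hnot
      have : (0:ℝ) < (1/2:ℝ) ^ (m + 2) := by positivity
      linarith
    obtain ⟨φ, hφmono, hφ⟩ := extraction_forall_of_frequently hfreq
    set A : Set ℕ := Set.range φ with hA
    have hAinf : A.Infinite := Set.infinite_range_of_injective hφmono.injective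
    have hlow : ∀ N, (1/2 : ℝ) ≤ ∏ n ∈ Finset.range N, (if n ∈ A then r n else 1) := by
      intro N
      set t : Finset ℕ := (Finset.range N).filter (fun k => φ k < N) with ht
      have himg : Finset.image φ t = (Finset.range N).filter (· ∈ A) := by
        ext n
        simp only [ht, Finset.mem_image, Finset.mem_filter, Finset.mem_range, hA, Set.mem_range]
        constructor
        · rintro ⟨k, ⟨-, hk2⟩, rfl⟩
          exact ⟨hk2, k, rfl⟩
        · rintro ⟨hn, k, rfl⟩
          exact ⟨k, ⟨lt_of_le_of_lt hφmono.le_apply hn, hn⟩, rfl⟩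
      have e1 : (∏ n ∈ Finset.range N, (if n ∈ A then r n else 1)) =
          ∏ k ∈ t, r (φ k) := by
        rw [← Finset.prod_filter, ← himg, Finset.prod_image
          (fun x _ y _ hxy => hφmono.injective hxy)]
      rw [e1]
      have e2 : (∏ k ∈ t, (1 - (1/2:ℝ) ^ (k + 2))) ≤ ∏ k ∈ t, r (φ k) := by
        apply Finset.prod_le_prod
        · intro k _
          have : (1/2:ℝ) ^ (k + 2) ≤ 1 := by
            apply pow_le_one₀ <;> norm_num
          linarith
        · intro k _
          exact (hφ k).le
      have e3 : 1 - (∑ k ∈ t, (1/2:ℝ) ^ (k + 2)) ≤ ∏ k ∈ t, (1 - (1/2:ℝ) ^ (k + 2)) := by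
        apply aux_prod_one_sub
        · intro k _; positivity
        · intro k _
          apply pow_le_one₀ <;> norm_num
      have e4 : (∑ k ∈ t, (1/2:ℝ) ^ (k + 2)) ≤ ∑ k ∈ Finset.range N, (1/2:ℝ) ^ (k + 2) := by
        apply Finset.sum_le_sum_of_subset_of_nonneg (Finset.filter_subset _ _)
        intro k _ _; positivity
      have e5 : (∑ k ∈ Finset.range N, (1/2:ℝ) ^ (k + 2)) ≤ 1/2 := by
        have hgeom : (∑ k ∈ Finset.range N, (1/2:ℝ) ^ k) = ((1/2:ℝ) ^ N - 1) / ((1/2:ℝ) - 1) :=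
          geom_sum_eq (by norm_num) N
        have hpow : (0:ℝ) ≤ (1/2:ℝ) ^ N := by positivity
        have : (∑ k ∈ Finset.range N, (1/2:ℝ) ^ (k + 2)) =
            (1/4) * ∑ k ∈ Finset.range N, (1/2:ℝ) ^ k := by
          rw [Finset.mul_sum]
          apply Finset.sum_congr rfl
          intro k _; ring
        have h2 : ((1/2:ℝ) ^ N - 1) / ((1/2:ℝ) - 1) = 2 - 2 * (1/2:ℝ) ^ N := by
          field_simp
          ring
        rw [this, hgeom, h2]
        linarith
      linarith
    have := ((H A hAinf).eventually_lt_const (by norm_num : (0:ℝ) < 1/2)).exists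
    obtain ⟨N, hN⟩ := this
    exact absurd (hlow N) (not_le.mpr hN)
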